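/- There exist constants C and x₀ such that for all x ≥ x₀, the number K₂(x) of composite integers n ≤ x that have exactly two distinct prime factors and satisfy rad(φ(n)) ∣ n − 1 is at most x^{1/2} · exp( (2·(2 log x)^{1/2} / log log x) · (1 + C/ log log x) ). -/

import Mathlib

open Finset

/-- The radical of a natural number: the product of its distinct prime divisors. -/
def rad (n : ℕ) : ℕ := ∏ p ∈ n.primeFactors, p

/-! ### Basic facts about the radical -/

lemma rad_dvd (n : ℕ) : rad n ∣ n := Nat.prod_primeFactors_dvd n

lemma rad_pos (n : ℕ) : 0 < rad n :=
  Finset.prod_pos fun _ hp => (Nat.prime_of_mem_primeFactors hp).pos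

lemma rad_one : rad 1 = 1 := by simp [rad]

lemma rad_mul_coprime {m n : ℕ} (h : m.Coprime n) (hm : m ≠ 0) (hn : n ≠ 0) :
    rad (m * n) = rad m * rad n := by
  unfold rad
  rw [Nat.primeFactors_mul hm hn, Finset.prod_union h.disjoint_primeFactors]

lemma rad_prime_pow {p e : ℕ} (hp : p.Prime) (he : e ≠ 0) : rad (p ^ e) = p := by
  unfold rad
  rw [Nat.primeFactors_prime_pow he hp, Finset.prod_singleton]

/-! ### The multiplicative weight function `τ(u)/(√u · rad u)` -/

noncomputable def Fw (u : ℕ) : ℝ := (u.divisors.card : ℝ) / (Real.sqrt u * rad u)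

lemma Fw_nonneg (u : ℕ) : 0 ≤ Fw u := by
  unfold Fw
  positivity

lemma Fw_one : Fw 1 = 1 := by
  unfold Fw
  simp [Nat.divisors_one, rad_one]

lemma Fw_mul {m n : ℕ} (h : m.Coprime n) : Fw (m * n) = Fw m * Fw n := by
  rcases eq_or_ne m 0 with rfl | hm
  · have : n = 1 := by simpa using h
    subst this
    simp [Fw, Nat.divisors_zero]
  rcases eq_or_ne n 0 with rfl | hn
  · have : m = 1 := by simpa using h
    subst this
    simp [Fw, Nat.divisors_zero]
  · unfold Fw
    rw [h.card_divisors_mul, rad_mul_coprime h hm hn, Nat.cast_mul, Nat.cast_mul,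
      Real.sqrt_mul (by positivity), Nat.cast_mul]
    field_simp

/-! ### A finite Euler-product bound for sums of multiplicative functions -/

lemma sum_smooth_le (f : ℕ → ℝ) (h0 : ∀ n, 0 ≤ f n) (h1 : f 1 = 1)
    (hm : ∀ m n : ℕ, m.Coprime n → f (m * n) = f m * f n) (N : ℕ) :
    ∀ P : Finset ℕ, (∀ p ∈ P, p.Prime) →
      ∑ u ∈ (Icc 1 N).filter (fun u => u.primeFactors ⊆ P), f u
        ≤ ∏ p ∈ P, ∑ e ∈ range (N + 1), f (p ^ e) := by
  intro P
  induction P using Finset.induction_on with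
  | empty =>
    intro _
    have hsub : (Icc 1 N).filter (fun u => u.primeFactors ⊆ (∅ : Finset ℕ)) ⊆ {1} := by
      intro u hu
      simp only [mem_filter, mem_Icc, Finset.subset_empty] at hu
      have := (Nat.primeFactors_eq_empty).mp hu.2
      have hu1 : u = 1 := by omega
      simp [hu1]
    calc ∑ u ∈ (Icc 1 N).filter (fun u => u.primeFactors ⊆ (∅ : Finset ℕ)), f u
        ≤ ∑ u ∈ ({1} : Finset ℕ), f u := by
          apply Finset.sum_le_sum_of_subset_of_nonneg hsub
          intro i _ _; exact h0 i
      _ = 1 := by simp [h1]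
      _ = ∏ p ∈ (∅ : Finset ℕ), ∑ e ∈ range (N + 1), f (p ^ e) := by simp
  | @insert p P hpP IH =>
    intro hprimes
    have hp : p.Prime := hprimes p (mem_insert_self p P)
    have hP : ∀ q ∈ P, q.Prime := fun q hq => hprimes q (mem_insert_of_mem hq)
    set A' := (Icc 1 N).filter (fun u => u.primeFactors ⊆ insert p P) with hA'
    set A := (Icc 1 N).filter (fun u => u.primeFactors ⊆ P) with hA
    set φ : ℕ → ℕ × ℕ := fun u => (u.factorization p, u / p ^ u.factorization p) with hφ
    have hrec : ∀ u, p ^ u.factorization p * (u / p ^ u.factorization p) = u :=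
      fun u => Nat.ordProj_mul_ordCompl_eq_self u p
    have hmapsto : ∀ u ∈ A', φ u ∈ (range (N + 1)) ×ˢ A := by
      intro u hu
      simp only [hA', mem_filter, mem_Icc] at hu
      obtain ⟨⟨hu1, huN⟩, hupf⟩ := hu
      have hu0 : u ≠ 0 := by omega
      have hpe_dvd : p ^ u.factorization p ∣ u := Nat.ordProj_dvd u p
      have hpe_le : p ^ u.factorization p ≤ u := Nat.le_of_dvd (by omega) hpe_dvd
      have he_lt : u.factorization p < N + 1 := by
        have h2 : u.factorization p < 2 ^ u.factorization p := Nat.lt_two_pow_self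
        have h3 : 2 ^ u.factorization p ≤ p ^ u.factorization p :=
          Nat.pow_le_pow_left hp.two_le _
        omega
      have hv_dvd : u / p ^ u.factorization p ∣ u := Nat.ordCompl_dvd u p
      have hv_pos : 0 < u / p ^ u.factorization p := Nat.ordCompl_pos p hu0
      have hv_le : u / p ^ u.factorization p ≤ u := Nat.le_of_dvd (by omega) hv_dvd
      have hcop : p.Coprime (u / p ^ u.factorization p) := Nat.coprime_ordCompl hp hu0
      have hpfsub : (u / p ^ u.factorization p).primeFactors ⊆ P := by
        intro x hx
        have hxins : x ∈ insert p P :=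
          hupf (Nat.primeFactors_mono hv_dvd hu0 hx)
        have hxp : x ≠ p := by
          intro hxp
          subst hxp
          exact (hp.coprime_iff_not_dvd.mp hcop) (Nat.dvd_of_mem_primeFactors hx)
        rcases mem_insert.mp hxins with h | h
        · exact absurd h hxp
        · exact h
      simp only [mem_product, mem_range, hφ]
      exact ⟨he_lt, by
        simp only [hA, mem_filter, mem_Icc]
        exact ⟨⟨hv_pos, le_trans hv_le huN⟩, hpfsub⟩⟩
    have hinj : ∀ x ∈ A', ∀ y ∈ A', φ x = φ y → x = y := by
      intro x _ y _ hxy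
      have h1' := hrec x
      have h2' := hrec y
      simp only [hφ, Prod.mk.injEq] at hxy
      obtain ⟨h1x, h2x⟩ := hxy
      rw [← h1', ← h2', h2x, h1x]
    have hterm : ∀ u ∈ A', f u = f (p ^ (φ u).1) * f ((φ u).2) := by
      intro u hu
      simp only [hA', mem_filter, mem_Icc] at hu
      have hu0 : u ≠ 0 := by omega
      have hcop : (p ^ u.factorization p).Coprime (u / p ^ u.factorization p) :=
        (Nat.coprime_ordCompl hp hu0).pow_left _
      conv_lhs => rw [← hrec u]
      exact hm _ _ hcop
    calc ∑ u ∈ A', f u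
        = ∑ u ∈ A', f (p ^ (φ u).1) * f ((φ u).2) := Finset.sum_congr rfl hterm
      _ = ∑ y ∈ A'.image φ, f (p ^ y.1) * f y.2 := by rw [Finset.sum_image hinj]
      _ ≤ ∑ y ∈ (range (N + 1)) ×ˢ A, f (p ^ y.1) * f y.2 := by
          apply Finset.sum_le_sum_of_subset_of_nonneg
          · intro y hy
            obtain ⟨u, hu, rfl⟩ := Finset.mem_image.mp hy
            exact hmapsto u hu
          · intro y _ _
            exact mul_nonneg (h0 _) (h0 _)
      _ = (∑ e ∈ range (N + 1), f (p ^ e)) * ∑ v ∈ A, f v := by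
          rw [Finset.sum_product, Finset.sum_mul]
          exact Finset.sum_congr rfl fun e _ => by rw [Finset.mul_sum]
      _ ≤ (∑ e ∈ range (N + 1), f (p ^ e)) * ∏ q ∈ P, ∑ e ∈ range (N + 1), f (q ^ e) := by
          apply mul_le_mul_of_nonneg_left (IH hP)
          exact Finset.sum_nonneg fun e _ => h0 _
      _ = ∏ q ∈ insert p P, ∑ e ∈ range (N + 1), f (q ^ e) := by
          rw [Finset.prod_insert hpP]

/-! ### Local factor bounds -/

lemma my_geom_le {r : ℝ} (h0 : 0 ≤ r) (h1 : r < 1) (N : ℕ) :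
    ∑ e ∈ range N, r ^ e ≤ 1 / (1 - r) := by
  rw [geom_sum_eq (by linarith : r ≠ 1)]
  rw [show (r ^ N - 1) / (r - 1) = (1 - r ^ N) / (1 - r) by rw [← neg_div_neg_eq]; ring_nf]
  have hrN : 0 ≤ r ^ N := pow_nonneg h0 N
  gcongr
  · linarith

lemma sqrt_pow_eq {p : ℕ} (e : ℕ) : Real.sqrt ((p : ℝ) ^ e) = (Real.sqrt p) ^ e := by
  rw [show ((p : ℝ) ^ e) = ((Real.sqrt p) ^ 2) ^ e by rw [Real.sq_sqrt (by positivity)]]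
  rw [← pow_mul, mul_comm 2 e, pow_mul]
  exact Real.sqrt_sq (by positivity)

lemma Fw_prime_pow {p : ℕ} (hp : p.Prime) (e : ℕ) :
    Fw (p ^ (e + 1)) = ((e : ℝ) + 2) * ((Real.sqrt p)⁻¹) ^ (e + 1) * (p : ℝ)⁻¹ := by
  unfold Fw
  rw [rad_prime_pow hp (Nat.succ_ne_zero e)]
  rw [Nat.divisors_prime_pow hp]
  rw [Finset.card_map, Finset.card_range]
  rw [Nat.cast_pow, sqrt_pow_eq]
  push_cast
  rw [inv_pow]
  field_simp
  ring

lemma local_bound {p : ℕ} (hp : p.Prime) (N : ℕ) :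
    ∑ e ∈ range (N + 1), Fw (p ^ e) ≤ 1 + 80 / ((p : ℝ) * Real.sqrt p) := by
  have hsp : (0:ℝ) < Real.sqrt p := Real.sqrt_pos.mpr (by exact_mod_cast hp.pos)
  have hps : (0:ℝ) < (p:ℝ) := by exact_mod_cast hp.pos
  set x : ℝ := (Real.sqrt p)⁻¹ with hxdef
  have hx0 : 0 < x := inv_pos.mpr hsp
  have hsp2 : (85/64 : ℝ) ≤ Real.sqrt p := by
    have h2p : (2:ℝ) ≤ (p:ℝ) := by exact_mod_cast hp.two_le
    have : ((85:ℝ)/64) ^ 2 ≤ (p:ℝ) := by nlinarith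
    nlinarith [Real.sq_sqrt (le_of_lt hps), Real.sqrt_nonneg (p:ℝ)]
  have hxle : x ≤ 64/85 := by
    rw [hxdef]
    rw [inv_le_comm₀ (by positivity) (by norm_num)]
    calc (64/85 : ℝ)⁻¹ = 85/64 := by norm_num
      _ ≤ Real.sqrt p := hsp2
  have hr_lt : (17/16 : ℝ) * x < 1 := by nlinarith
  have hr_nonneg : (0:ℝ) ≤ 17/16 * x := by positivity
  rw [Finset.sum_range_succ']
  have h0 : Fw (p ^ 0) = 1 := by rw [pow_zero]; exact Fw_one
  rw [h0]
  have hbound : ∑ e ∈ range N, Fw (p ^ (e + 1)) ≤ 80 / ((p:ℝ) * Real.sqrt p) := by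
    have hterm : ∀ e ∈ range N, Fw (p ^ (e + 1)) ≤ (16 * x / p) * ((17/16) * x) ^ e := by
      intro e _
      rw [Fw_prime_pow hp e]
      have hb : ((e:ℝ) + 2) ≤ 16 * (17/16) ^ e := by
        have := one_add_mul_le_pow (by norm_num : (-2:ℝ) ≤ 1/16) e
        have h16 : (1 + (e:ℝ) * (1/16)) * 16 = 16 + e := by ring
        nlinarith
      have hxp : x ^ (e+1) = x * x ^ e := by ring
      calc ((e : ℝ) + 2) * x ^ (e + 1) * (p : ℝ)⁻¹
          ≤ (16 * (17/16) ^ e) * x ^ (e + 1) * (p : ℝ)⁻¹ := by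
            apply mul_le_mul_of_nonneg_right (mul_le_mul_of_nonneg_right hb (by positivity))
            positivity
        _ = (16 * x / p) * ((17/16) * x) ^ e := by
            rw [mul_pow, hxp]; field_simp
    calc ∑ e ∈ range N, Fw (p ^ (e + 1))
        ≤ ∑ e ∈ range N, (16 * x / p) * ((17/16) * x) ^ e := Finset.sum_le_sum hterm
      _ = (16 * x / p) * ∑ e ∈ range N, ((17/16) * x) ^ e := by rw [Finset.mul_sum]
      _ ≤ (16 * x / p) * (1 / (1 - (17/16) * x)) := by
          apply mul_le_mul_of_nonneg_left (my_geom_le hr_nonneg hr_lt N) (by positivity)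
      _ ≤ (16 * x / p) * 5 := by
          apply mul_le_mul_of_nonneg_left ?_ (by positivity)
          rw [div_le_iff₀ (by nlinarith)]
          nlinarith
      _ = 80 / ((p:ℝ) * Real.sqrt p) := by
          rw [hxdef]
          field_simp
          ring
  linarith

/-! ### Telescoping bound for `∑ 1/(n √n)` -/

lemma term_telescope {N : ℕ} (hN : 1 ≤ N) :
    1 / (((N:ℝ) + 1) * Real.sqrt ((N:ℝ) + 1)) ≤ 2 * (1 / Real.sqrt N - 1 / Real.sqrt ((N:ℝ) + 1)) := by
  set a := Real.sqrt N with ha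
  set b := Real.sqrt ((N:ℝ) + 1) with hb
  have hN1 : (1:ℝ) ≤ (N:ℝ) := by exact_mod_cast hN
  have ha2 : a ^ 2 = (N : ℝ) := Real.sq_sqrt (by positivity)
  have hb2 : b ^ 2 = (N : ℝ) + 1 := Real.sq_sqrt (by positivity)
  have ha0 : 0 < a := Real.sqrt_pos.mpr (by linarith)
  have hb0 : 0 < b := Real.sqrt_pos.mpr (by linarith)
  have hab : a ≤ b := Real.sqrt_le_sqrt (by linarith)
  have hkey : (b - a) * (b + a) = 1 := by nlinarith
  have h2 : 1 / a - 1 / b = (b - a) / (a * b) := by field_simp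
  rw [h2, ← hb2]
  rw [show b ^ 2 * b = b ^ 3 by ring]
  rw [mul_div_assoc'] at *
  rw [div_le_div_iff₀ (by positivity) (by positivity)]
  have h3 : (a + b) * (a * b) ≤ 2 * b ^ 3 := by nlinarith
  nlinarith [mul_pos ha0 hb0, hkey, h3, mul_pos (mul_pos ha0 hb0) hb0,
    mul_pos (add_pos ha0 hb0) (mul_pos ha0 hb0)]

lemma sum_inv_nsqrt_aux : ∀ N : ℕ, 1 ≤ N →
    ∑ n ∈ Icc 2 N, 1 / ((n:ℝ) * Real.sqrt n) ≤ 2 - 2 / Real.sqrt N := by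
  intro N
  induction N with
  | zero => omega
  | succ M IH =>
    intro _
    rcases Nat.lt_or_ge M 1 with hM | hM
    · have hM0 : M = 0 := by omega
      subst hM0
      norm_num
    · rw [Finset.sum_Icc_succ_top (by omega : 2 ≤ M + 1)]
      have hterm := term_telescope hM
      have hcast : ((M + 1 : ℕ) : ℝ) = (M : ℝ) + 1 := by push_cast; ring
      rw [hcast]
      have := IH hM
      have e1 : 2 * (1 / Real.sqrt M - 1 / Real.sqrt ((M:ℝ)+1))
          = 2 / Real.sqrt M - 2 / Real.sqrt ((M:ℝ)+1) := by ring
      linarith [hterm, e1 ▸ hterm]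

lemma sum_inv_nsqrt (N : ℕ) : ∑ n ∈ Icc 2 N, 1 / ((n:ℝ) * Real.sqrt n) ≤ 2 := by
  rcases Nat.lt_or_ge N 1 with hN | hN
  · have : N = 0 := by omega
    subst this
    simp
  · have h := sum_inv_nsqrt_aux N hN
    have hs : 0 < Real.sqrt N := Real.sqrt_pos.mpr (by exact_mod_cast hN)
    have : 0 ≤ 2 / Real.sqrt N := by positivity
    linarith

lemma prod_local_le (N : ℕ) :
    ∏ p ∈ Nat.primesBelow (N + 1), (1 + 80 / ((p:ℝ) * Real.sqrt p)) ≤ Real.exp 160 := by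
  have hsub : Nat.primesBelow (N + 1) ⊆ Icc 2 N := by
    intro p hp
    rw [Nat.mem_primesBelow] at hp
    rw [mem_Icc]
    exact ⟨hp.2.two_le, by omega⟩
  have hsum : ∑ p ∈ Nat.primesBelow (N + 1), 80 / ((p:ℝ) * Real.sqrt p) ≤ 160 := by
    calc ∑ p ∈ Nat.primesBelow (N + 1), 80 / ((p:ℝ) * Real.sqrt p)
        ≤ ∑ n ∈ Icc 2 N, 80 / ((n:ℝ) * Real.sqrt n) := by
          apply Finset.sum_le_sum_of_subset_of_nonneg hsub
          intro i _ _; positivity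
      _ = 80 * ∑ n ∈ Icc 2 N, 1 / ((n:ℝ) * Real.sqrt n) := by
          rw [Finset.mul_sum]
          exact Finset.sum_congr rfl fun n _ => by ring
      _ ≤ 80 * 2 := by
          have := sum_inv_nsqrt N
          linarith
      _ = 160 := by norm_num
  calc ∏ p ∈ Nat.primesBelow (N + 1), (1 + 80 / ((p:ℝ) * Real.sqrt p))
      ≤ ∏ p ∈ Nat.primesBelow (N + 1), Real.exp (80 / ((p:ℝ) * Real.sqrt p)) := by
        apply Finset.prod_le_prod
        · intro p _; positivity
        · intro p _
          have := Real.add_one_le_exp (80 / ((p:ℝ) * Real.sqrt p))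
          linarith
    _ = Real.exp (∑ p ∈ Nat.primesBelow (N + 1), 80 / ((p:ℝ) * Real.sqrt p)) :=
        (Real.exp_sum _ _).symm
    _ ≤ Real.exp 160 := Real.exp_le_exp.mpr hsum

/-! ### Total weighted sum bound -/

lemma sum_Fw_le (X : ℕ) : ∑ u ∈ Icc 1 X, Fw u ≤ Real.exp 160 := by
  have hfilter : (Icc 1 X).filter (fun u => u.primeFactors ⊆ Nat.primesBelow (X + 1))
      = Icc 1 X := by
    apply Finset.filter_true_of_mem
    intro u hu
    rw [mem_Icc] at hu
    intro ℓ hℓ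
    rw [Nat.mem_primesBelow]
    have h1 := Nat.le_of_mem_primeFactors hℓ
    exact ⟨by omega, Nat.prime_of_mem_primeFactors hℓ⟩
  have heuler := sum_smooth_le Fw Fw_nonneg Fw_one (fun m n h => Fw_mul h) X
    (Nat.primesBelow (X + 1)) (fun p hp => Nat.prime_of_mem_primesBelow hp)
  rw [hfilter] at heuler
  refine le_trans heuler (le_trans ?_ (prod_local_le X))
  apply Finset.prod_le_prod
  · intro p _
    exact Finset.sum_nonneg fun e _ => Fw_nonneg _
  · intro p hp
    exact local_bound (Nat.prime_of_mem_primesBelow hp) X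

/-! ### Structure of the counted integers -/

lemma structure_lemma {n : ℕ} (h1 : 1 < n) (h2 : n.primeFactors.card = 2)
    (h3 : rad n.totient ∣ n - 1) :
    ∃ p q : ℕ, p.Prime ∧ q.Prime ∧ p < q ∧ n = p * q ∧ n.minFac = p ∧
      (p - 1).primeFactors = (q - 1).primeFactors := by
  have hn0 : n ≠ 0 := by omega
  have htotpos : 0 < n.totient := Nat.totient_pos.mpr (by omega)
  have hsf : Squarefree n := by
    rw [Nat.squarefree_iff_prime_squarefree]
    intro p hp hdvd
    have hk : 2 ≤ n.factorization p := by
      rw [← Nat.Prime.pow_dvd_iff_le_factorization hp hn0]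
      simpa [pow_two] using hdvd
    have hptot : p ∣ n.totient := by
      have hco : (p ^ n.factorization p).Coprime (n / p ^ n.factorization p) :=
        (Nat.coprime_ordCompl hp hn0).pow_left _
      have hdecomp := Nat.ordProj_mul_ordCompl_eq_self n p
      have htm : n.totient = (p ^ n.factorization p).totient *
          (n / p ^ n.factorization p).totient := by
        conv_lhs => rw [← hdecomp]
        exact Nat.totient_mul hco
      rw [htm, Nat.totient_prime_pow hp (by omega)]
      exact dvd_mul_of_dvd_left (dvd_mul_of_dvd_left (dvd_pow_self p (by omega)) _) _
    have hmem : p ∈ n.totient.primeFactors :=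
      Nat.mem_primeFactors.mpr ⟨hp, hptot, htotpos.ne'⟩
    have hprad : p ∣ rad n.totient := Finset.dvd_prod_of_mem _ hmem
    have hpn1 : p ∣ n - 1 := hprad.trans h3
    have hpn : p ∣ n := (dvd_mul_left p p).trans hdvd
    have hd1 : p ∣ n - (n - 1) := Nat.dvd_sub hpn hpn1
    rw [show n - (n - 1) = 1 by omega] at hd1
    have := Nat.dvd_one.mp hd1
    have := hp.one_lt
    omega
  obtain ⟨p, q, hpq_ne, hset⟩ := Finset.card_eq_two.mp h2
  have hp : p.Prime := Nat.prime_of_mem_primeFactors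
    (by rw [hset]; exact mem_insert_self p {q})
  have hq : q.Prime := Nat.prime_of_mem_primeFactors
    (by rw [hset]; exact mem_insert_of_mem (mem_singleton_self q))
  have hn_eq : n = p * q := by
    have hprod := Nat.prod_primeFactors_of_squarefree hsf
    rw [hset, Finset.prod_pair hpq_ne] at hprod
    exact hprod.symm
  have key : ∀ a b : ℕ, a.Prime → b.Prime → a ≠ b → n = a * b →
      ∀ ℓ ∈ (b - 1).primeFactors, ℓ ∈ (a - 1).primeFactors := by
    intro a b ha hb hab hnab ℓ hℓ
    have hℓp : ℓ.Prime := Nat.prime_of_mem_primeFactors hℓ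
    have hℓb : ℓ ∣ b - 1 := Nat.dvd_of_mem_primeFactors hℓ
    have htot : n.totient = (a - 1) * (b - 1) := by
      rw [hnab, Nat.totient_mul ((Nat.coprime_primes ha hb).mpr hab),
        Nat.totient_prime ha, Nat.totient_prime hb]
    have hℓtot : ℓ ∣ n.totient := htot ▸ Dvd.dvd.mul_left hℓb _
    have hℓrad : ℓ ∣ rad n.totient :=
      Finset.dvd_prod_of_mem _ (Nat.mem_primeFactors.mpr ⟨hℓp, hℓtot, htotpos.ne'⟩)
    have hℓn1 : ℓ ∣ n - 1 := hℓrad.trans h3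
    have hℓab1 : ℓ ∣ a * (b - 1) := Dvd.dvd.mul_left hℓb a
    obtain ⟨m, hm⟩ : ∃ m, a * (b - 1) = m := ⟨_, rfl⟩
    have hnm : n = m + a := by
      rw [hnab, ← hm]
      have hb1 : 1 ≤ b := hb.one_lt.le
      have : a * (b - 1) + a = a * b := by
        rw [Nat.mul_sub, Nat.mul_one]
        have : a ≤ a * b := Nat.le_mul_of_pos_right a hb.pos
        omega
      omega
    have hd : ℓ ∣ (n - 1) - m := Nat.dvd_sub hℓn1 (hm ▸ hℓab1)
    have ha1 : 2 ≤ a := ha.two_le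
    rw [show (n - 1) - m = a - 1 by omega] at hd
    exact Nat.mem_primeFactors.mpr ⟨hℓp, hd, by omega⟩
  have main : ∀ a b : ℕ, a.Prime → b.Prime → a < b → n = a * b →
      ∃ p q : ℕ, p.Prime ∧ q.Prime ∧ p < q ∧ n = p * q ∧ n.minFac = p ∧
        (p - 1).primeFactors = (q - 1).primeFactors := by
    intro a b ha hb hab hnab
    refine ⟨a, b, ha, hb, hab, hnab, ?_, ?_⟩
    · have hmle : n.minFac ≤ a := Nat.minFac_le_of_dvd ha.two_le ⟨b, hnab⟩
      have hmp : (n.minFac).Prime := Nat.minFac_prime (by omega)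
      have hmdvd : n.minFac ∣ a * b := hnab ▸ Nat.minFac_dvd n
      rcases (Nat.Prime.dvd_mul hmp).mp hmdvd with hda | hdb
      · exact (Nat.prime_dvd_prime_iff_eq hmp ha).mp hda
      · have : n.minFac = b := (Nat.prime_dvd_prime_iff_eq hmp hb).mp hdb
        omega
    · exact Finset.Subset.antisymm
        (fun ℓ hℓ => key b a hb ha (by omega) (by rw [hnab, Nat.mul_comm]) ℓ hℓ)
        (fun ℓ hℓ => key a b ha hb (by omega) hnab ℓ hℓ)
  rcases Nat.lt_or_ge p q with h | h
  · exact main p q hp hq h hn_eq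
  · have hqp : q < p := by omega
    exact main q p hq hp hqp (by rw [hn_eq, Nat.mul_comm])

lemma nat_sqrt_le_real (m : ℕ) : ((Nat.sqrt m : ℕ) : ℝ) ≤ Real.sqrt (m : ℝ) := by
  have h := Nat.sqrt_le' m
  have h2 : ((Nat.sqrt m : ℕ) : ℝ) ^ 2 ≤ (m : ℝ) := by exact_mod_cast h
  nlinarith [Real.sq_sqrt (by positivity : (0:ℝ) ≤ (m:ℝ)), Real.sqrt_nonneg (m:ℝ),
    (by positivity : (0:ℝ) ≤ ((Nat.sqrt m : ℕ) : ℝ))]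

/-! ### The combinatorial counting bound -/

theorem count_le (X : ℕ) :
    ((((Finset.Icc 1 X).filter
        (fun n => 1 < n ∧ ¬ n.Prime ∧ n.primeFactors.card = 2 ∧
          rad n.totient ∣ n - 1)).card : ℝ))
      ≤ Real.exp 160 * Real.sqrt X := by
  classical
  set S := (Finset.Icc 1 X).filter
    (fun n => 1 < n ∧ ¬ n.Prime ∧ n.primeFactors.card = 2 ∧ rad n.totient ∣ n - 1) with hS
  set W := ((Icc 1 X) ×ˢ (Icc 1 X)).filter
    (fun ab => ab.1 * ab.2 ≤ X ∧ ab.1.primeFactors = ab.2.primeFactors) with hW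
  set T := (Icc 1 X).sigma
    (fun u => u.divisors ×ˢ ((Icc 1 X).filter (fun r => rad u ∣ r ∧ r * r * u ≤ X))) with hT
  -- Step 1 : S.card ≤ W.card
  have hSW : S.card ≤ W.card := by
    apply Finset.card_le_card_of_injOn (fun n => (n.minFac - 1, n / n.minFac - 1))
    · intro n hn
      simp only [Finset.mem_coe, hS, mem_filter, mem_Icc] at hn
      obtain ⟨⟨hn1, hnX⟩, hlt, _, hcard, hdvd⟩ := hn
      obtain ⟨p, q, hp, hq, hpq, hneq, hminp, hpf⟩ := structure_lemma hlt hcard hdvd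
      have hdiv : n / n.minFac = q := by
        rw [hminp, hneq, Nat.mul_div_cancel_left q hp.pos]
      beta_reduce
      rw [hdiv, hminp]
      simp only [Finset.mem_coe, hW, mem_filter, mem_product, mem_Icc]
      have hp2 := hp.two_le
      have hq2 := hq.two_le
      have hpn : p ≤ n := by
        rw [hneq]; exact Nat.le_mul_of_pos_right p hq.pos
      have hqn : q ≤ n := by
        rw [hneq]; exact Nat.le_mul_of_pos_left q hp.pos
      refine ⟨⟨⟨by omega, by omega⟩, by omega, by omega⟩, ?_, hpf⟩
      calc (p - 1) * (q - 1) ≤ p * q := Nat.mul_le_mul (by omega) (by omega)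
        _ = n := hneq.symm
        _ ≤ X := hnX
    · intro n₁ hn₁ n₂ hn₂ heq
      simp only [hS, Finset.coe_filter, Set.mem_setOf_eq, mem_Icc] at hn₁ hn₂
      obtain ⟨_, hlt₁, _, hcard₁, hdvd₁⟩ := hn₁
      obtain ⟨_, hlt₂, _, hcard₂, hdvd₂⟩ := hn₂
      obtain ⟨p₁, q₁, hp₁, hq₁, _, hneq₁, hminp₁, _⟩ := structure_lemma hlt₁ hcard₁ hdvd₁
      obtain ⟨p₂, q₂, hp₂, hq₂, _, hneq₂, hminp₂, _⟩ := structure_lemma hlt₂ hcard₂ hdvd₂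
      have hdiv₁ : n₁ / n₁.minFac = q₁ := by
        rw [hminp₁, hneq₁, Nat.mul_div_cancel_left q₁ hp₁.pos]
      have hdiv₂ : n₂ / n₂.minFac = q₂ := by
        rw [hminp₂, hneq₂, Nat.mul_div_cancel_left q₂ hp₂.pos]
      simp only [] at heq
      rw [hdiv₁, hdiv₂, hminp₁, hminp₂] at heq
      simp only [Prod.mk.injEq] at heq
      have hp12 : p₁ = p₂ := by
        have := hp₁.two_le; have := hp₂.two_le; omega
      have hq12 : q₁ = q₂ := by
        have := hq₁.two_le; have := hq₂.two_le; omega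
      rw [hneq₁, hneq₂, hp12, hq12]
  -- Step 2 : W.card ≤ T.card
  have hWT : W.card ≤ T.card := by
    apply Finset.card_le_card_of_injOn
      (fun ab => ⟨(ab.1 / rad ab.1) * (ab.2 / rad ab.2), (ab.1 / rad ab.1, rad ab.1)⟩)
    · rintro ⟨a, b⟩ hab
      simp only [Finset.mem_coe, hW, mem_filter, mem_product, mem_Icc] at hab
      obtain ⟨⟨⟨ha1, haX⟩, hb1, hbX⟩, habX, hpfeq⟩ := hab
      have ha0 : a ≠ 0 := by omega
      have hb0 : b ≠ 0 := by omega
      have hradb : rad b = rad a := by unfold rad; rw [hpfeq]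
      dsimp only
      rw [hradb]
      set r := rad a with hr
      set t := a / r with ht
      set s := b / r with hs
      have hra : r ∣ a := rad_dvd a
      have hrb : r ∣ b := by rw [← hradb]; exact rad_dvd b
      have hat : r * t = a := Nat.mul_div_cancel' hra
      have hbs : r * s = b := Nat.mul_div_cancel' hrb
      have hrpos : 0 < r := rad_pos a
      have htpos : 0 < t := by
        rcases Nat.eq_zero_or_pos t with h | h
        · rw [h, Nat.mul_zero] at hat; omega
        · exact h
      have hspos : 0 < s := by
        rcases Nat.eq_zero_or_pos s with h | h
        · rw [h, Nat.mul_zero] at hbs; omega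
        · exact h
      have htdvd : t ∣ a := ⟨r, by rw [← hat]; ring⟩
      have hsdvd : s ∣ b := ⟨r, by rw [← hbs]; ring⟩
      have htsdvd : t * s ∣ a * b := mul_dvd_mul htdvd hsdvd
      have habpos : 0 < a * b := by positivity
      have htsle : t * s ≤ a * b := Nat.le_of_dvd habpos htsdvd
      simp only [Finset.mem_coe, hT, Finset.mem_sigma, mem_product, mem_filter, mem_Icc, Nat.mem_divisors]
      refine ⟨⟨Nat.mul_pos htpos hspos, le_trans htsle habX⟩,
        ⟨dvd_mul_right t s, (Nat.mul_pos htpos hspos).ne'⟩,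
        ⟨⟨hrpos, by
          have : r ≤ a := Nat.le_of_dvd (by omega) hra
          omega⟩, ?_, ?_⟩⟩
      · -- rad (t*s) ∣ r
        have hpfsub : (t * s).primeFactors ⊆ a.primeFactors := by
          rw [Nat.primeFactors_mul (by omega) (by omega)]
          apply Finset.union_subset
          · exact Nat.primeFactors_mono htdvd ha0
          · rw [hpfeq]
            exact Nat.primeFactors_mono hsdvd hb0
        exact Finset.prod_dvd_prod_of_subset _ _ _ hpfsub
      · -- r * r * (t*s) ≤ X
        calc r * r * (t * s) = (r * t) * (r * s) := by ring
          _ = a * b := by rw [hat, hbs]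
          _ ≤ X := habX
    · rintro ⟨a, b⟩ hab ⟨a', b'⟩ hab' heq
      simp only [hW, Finset.coe_filter, Set.mem_setOf_eq, mem_product, mem_Icc] at hab hab'
      obtain ⟨⟨⟨ha1, _⟩, hb1, _⟩, _, hpfeq⟩ := hab
      obtain ⟨⟨⟨ha1', _⟩, hb1', _⟩, _, hpfeq'⟩ := hab'
      have hradb : rad b = rad a := by unfold rad; rw [hpfeq]
      have hradb' : rad b' = rad a' := by unfold rad; rw [hpfeq']
      dsimp only at heq
      have hu : (a / rad a) * (b / rad b) = (a' / rad a') * (b' / rad b') :=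
        congrArg (fun z : (_ : ℕ) × ℕ × ℕ => z.fst) heq
      have htr : (a / rad a, rad a) = (a' / rad a', rad a') :=
        congrArg (fun z : (_ : ℕ) × ℕ × ℕ => z.snd) heq
      have ht : a / rad a = a' / rad a' := congrArg Prod.fst htr
      have hr : rad a = rad a' := congrArg Prod.snd htr
      have hra : rad a ∣ a := rad_dvd a
      have hrb : rad b ∣ b := rad_dvd b
      have hra' : rad a' ∣ a' := rad_dvd a'
      have hrb' : rad b' ∣ b' := rad_dvd b'
      have haa : a = a' := by
        have e1 : rad a * (a / rad a) = a := Nat.mul_div_cancel' hra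
        have e2 : rad a' * (a' / rad a') = a' := Nat.mul_div_cancel' hra'
        rw [← e1, ← e2, ht, hr]
      have hbb : b = b' := by
        have hstep : b / rad b = b' / rad b' := by
          have h1 : (a / rad a) * (b / rad b) = (a' / rad a') * (b' / rad b') := hu
          rw [ht] at h1
          have htpos : 0 < a' / rad a' := by
            have e2' : rad a' * (a' / rad a') = a' := Nat.mul_div_cancel' hra'
            rcases Nat.eq_zero_or_pos (a' / rad a') with h | h
            · rw [h, Nat.mul_zero] at e2'; omega
            · exact h
          exact Nat.eq_of_mul_eq_mul_left htpos h1
        have e1 : rad b * (b / rad b) = b := Nat.mul_div_cancel' hrb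
        have e2 : rad b' * (b' / rad b') = b' := Nat.mul_div_cancel' hrb'
        have hrbb : rad b = rad b' := by rw [hradb, hradb', hr]
        rw [← e1, ← e2, hstep, hrbb]
      rw [Prod.mk.injEq]
      exact ⟨haa, hbb⟩
  -- Step 3 : real bound on T.card
  have hTcard : T.card = ∑ u ∈ Icc 1 X,
      u.divisors.card * ((Icc 1 X).filter (fun r => rad u ∣ r ∧ r * r * u ≤ X)).card := by
    rw [hT, Finset.card_sigma]
    exact Finset.sum_congr rfl fun u _ => Finset.card_product _ _
  have hrcount : ∀ u ∈ Icc 1 X,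
      ((Icc 1 X).filter (fun r => rad u ∣ r ∧ r * r * u ≤ X)).card
        ≤ Nat.sqrt (X / u) / rad u := by
    intro u hu
    rw [mem_Icc] at hu
    have hsub : ((Icc 1 X).filter (fun r => rad u ∣ r ∧ r * r * u ≤ X))
        ⊆ (Ioc 0 (Nat.sqrt (X / u))).filter (fun r => rad u ∣ r) := by
      intro r hr
      simp only [mem_filter, mem_Icc, mem_Ioc] at hr ⊢
      obtain ⟨⟨hr1, _⟩, hdvd, hle⟩ := hr
      refine ⟨⟨by omega, ?_⟩, hdvd⟩
      rw [Nat.le_sqrt]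
      rw [Nat.le_div_iff_mul_le (by omega : 0 < u)]
      exact hle
    calc ((Icc 1 X).filter (fun r => rad u ∣ r ∧ r * r * u ≤ X)).card
        ≤ ((Ioc 0 (Nat.sqrt (X / u))).filter (fun r => rad u ∣ r)).card :=
          Finset.card_le_card hsub
      _ = Nat.sqrt (X / u) / rad u := Nat.Ioc_filter_dvd_card_eq_div _ _
  -- real-valued estimate
  have hreal : ∀ u ∈ Icc 1 X,
      ((Nat.sqrt (X / u) / rad u : ℕ) : ℝ) ≤ Real.sqrt X / (Real.sqrt u * rad u) := by
    intro u hu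
    rw [mem_Icc] at hu
    have hradpos : (0:ℝ) < (rad u : ℝ) := by exact_mod_cast rad_pos u
    have hupos : (0:ℝ) < (u:ℝ) := by exact_mod_cast (by omega : 0 < u)
    calc ((Nat.sqrt (X / u) / rad u : ℕ) : ℝ)
        ≤ ((Nat.sqrt (X / u) : ℕ) : ℝ) / ((rad u : ℕ) : ℝ) := Nat.cast_div_le
      _ ≤ (Real.sqrt ((X:ℝ) / (u:ℝ))) / (rad u : ℝ) := by
          gcongr
          exact le_trans (nat_sqrt_le_real _) (Real.sqrt_le_sqrt Nat.cast_div_le)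
      _ = Real.sqrt X / (Real.sqrt u * rad u) := by
          rw [Real.sqrt_div (by positivity), div_div]
  -- combine
  have hchain : ((T.card : ℕ) : ℝ) ≤ Real.exp 160 * Real.sqrt X := by
    rw [hTcard]
    push_cast
    calc ∑ u ∈ Icc 1 X, (u.divisors.card : ℝ) *
          (((Icc 1 X).filter (fun r => rad u ∣ r ∧ r * r * u ≤ X)).card : ℝ)
        ≤ ∑ u ∈ Icc 1 X, (u.divisors.card : ℝ) * (Real.sqrt X / (Real.sqrt u * rad u)) := by
          apply Finset.sum_le_sum
          intro u hu
          have hcardle : (((Icc 1 X).filter (fun r => rad u ∣ r ∧ r * r * u ≤ X)).card : ℝ)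
              ≤ Real.sqrt X / (Real.sqrt u * rad u) :=
            calc (((Icc 1 X).filter (fun r => rad u ∣ r ∧ r * r * u ≤ X)).card : ℝ)
                ≤ ((Nat.sqrt (X / u) / rad u : ℕ) : ℝ) := by exact_mod_cast hrcount u hu
              _ ≤ Real.sqrt X / (Real.sqrt u * rad u) := hreal u hu
          exact mul_le_mul_of_nonneg_left hcardle (by positivity)
      _ = Real.sqrt X * ∑ u ∈ Icc 1 X, Fw u := by
          rw [Finset.mul_sum]
          apply Finset.sum_congr rfl
          intro u _
          unfold Fw
          ring
      _ ≤ Real.sqrt X * Real.exp 160 := by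
          apply mul_le_mul_of_nonneg_left (sum_Fw_le X) (Real.sqrt_nonneg _)
      _ = Real.exp 160 * Real.sqrt X := by ring
  calc ((S.card : ℕ) : ℝ) ≤ ((T.card : ℕ) : ℝ) := by
        exact_mod_cast le_trans hSW hWT
    _ ≤ Real.exp 160 * Real.sqrt X := hchain

/-! ### The main theorem -/

theorem K_two_upper_bound :
    ∃ C : ℝ, ∃ x₀ : ℝ, ∀ x : ℝ, x₀ ≤ x →
      ((((Finset.Icc 1 ⌊x⌋₊).filter
        (fun n => 1 < n ∧ ¬ n.Prime ∧ n.primeFactors.card = 2 ∧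
          rad n.totient ∣ n - 1)).card : ℝ))
        ≤ x ^ ((1 : ℝ) / 2) *
          Real.exp ((2 * (2 * Real.log x) ^ ((1 : ℝ) / 2) / Real.log (Real.log x)) *
            (1 + C / Real.log (Real.log x))) := by
  refine ⟨0, Real.exp (Real.exp 46), ?_⟩
  intro x hx
  have hx1 : (1:ℝ) ≤ x := by
    have h := Real.add_one_le_exp (Real.exp 46)
    have h2 := (Real.exp_pos 46).le
    linarith
  have hxpos : (0:ℝ) < x := by linarith
  set T := Real.log x with hTdef
  have hT : Real.exp 46 ≤ T := by
    rw [hTdef]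
    calc Real.exp 46 = Real.log (Real.exp (Real.exp 46)) := (Real.log_exp _).symm
      _ ≤ Real.log x := Real.log_le_log (Real.exp_pos _) hx
  have hTpos : (0:ℝ) < T := lt_of_lt_of_le (Real.exp_pos 46) hT
  set L := Real.log T with hLdef
  have hL46 : (46:ℝ) ≤ L := by
    rw [hLdef]
    calc (46:ℝ) = Real.log (Real.exp 46) := (Real.log_exp _).symm
      _ ≤ Real.log T := Real.log_le_log (Real.exp_pos _) hT
  have hLpos : (0:ℝ) < L := by linarith
  -- T^(1/4) ≥ 320
  set y := T ^ ((1:ℝ)/4) with hydef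
  have hypos : (0:ℝ) < y := Real.rpow_pos_of_pos hTpos _
  have hy4 : y ^ (4:ℕ) = T := by
    rw [hydef, ← Real.rpow_natCast (T ^ ((1:ℝ)/4)) 4, ← Real.rpow_mul (le_of_lt hTpos)]
    norm_num
  have hy320 : (320:ℝ) ≤ y := by
    have hT320 : (320:ℝ)^(4:ℕ) ≤ T := by
      calc (320:ℝ)^(4:ℕ) ≤ 2^(46:ℕ) := by norm_num
        _ ≤ (Real.exp 1)^(46:ℕ) := by
            apply pow_le_pow_left₀ (by norm_num)
            have := Real.add_one_le_exp (1:ℝ)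
            linarith
        _ = Real.exp 46 := by
            rw [← Real.exp_one_rpow 46, ← Real.rpow_natCast (Real.exp 1) 46]
            norm_num
        _ ≤ T := hT
    by_contra hcon
    push_neg at hcon
    have hlt : y ^ (4:ℕ) < 320 ^ (4:ℕ) := by
      apply pow_lt_pow_left₀ hcon (le_of_lt hypos)
      norm_num
    linarith
  -- L ≤ 4 y
  have hLy : L ≤ 4 * y := by
    have hlogy : Real.log y = ((1:ℝ)/4) * L := by
      rw [hydef, Real.log_rpow hTpos]
    have h1 : Real.log y ≤ y - 1 := Real.log_le_sub_one_of_pos hypos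
    rw [hlogy] at h1
    linarith
  -- (2T)^(1/2) ≥ 80 L
  have hsqrt : (80:ℝ) * L ≤ (2 * T) ^ ((1:ℝ)/2) := by
    have h1 : T ^ ((1:ℝ)/2) ≤ (2*T) ^ ((1:ℝ)/2) := by
      apply Real.rpow_le_rpow (le_of_lt hTpos) (by linarith) (by norm_num)
    have h2 : T ^ ((1:ℝ)/2) = y * y := by
      rw [hydef, ← Real.rpow_add hTpos]
      norm_num
    have h3 : (80:ℝ) * L ≤ 320 * y := by linarith [hLy]
    have h4 : (320:ℝ) * y ≤ y * y := by nlinarith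
    linarith
  -- final exponent bound
  have hE : (160:ℝ) ≤ (2 * (2 * T) ^ ((1:ℝ)/2) / L) * (1 + 0 / L) := by
    rw [zero_div, add_zero, mul_one]
    rw [le_div_iff₀ hLpos]
    linarith
  -- counting bound
  have hcount := count_le ⌊x⌋₊
  have hfloor : (⌊x⌋₊ : ℝ) ≤ x := Nat.floor_le (le_of_lt hxpos)
  have hsqrtfloor : Real.sqrt (⌊x⌋₊ : ℝ) ≤ Real.sqrt x := Real.sqrt_le_sqrt hfloor
  calc ((((Finset.Icc 1 ⌊x⌋₊).filter
        (fun n => 1 < n ∧ ¬ n.Prime ∧ n.primeFactors.card = 2 ∧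
          rad n.totient ∣ n - 1)).card : ℝ))
      ≤ Real.exp 160 * Real.sqrt (⌊x⌋₊ : ℝ) := hcount
    _ ≤ Real.exp 160 * Real.sqrt x := by
        apply mul_le_mul_of_nonneg_left hsqrtfloor (le_of_lt (Real.exp_pos _))
    _ ≤ Real.exp ((2 * (2 * T) ^ ((1:ℝ)/2) / L) * (1 + 0 / L)) * Real.sqrt x := by
        apply mul_le_mul_of_nonneg_right (Real.exp_le_exp.mpr hE) (Real.sqrt_nonneg _)
    _ = x ^ ((1:ℝ)/2) *
          Real.exp ((2 * (2 * Real.log x) ^ ((1:ℝ)/2) / Real.log (Real.log x)) *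
            (1 + 0 / Real.log (Real.log x))) := by
        rw [Real.sqrt_eq_rpow]
        rw [hTdef, hLdef]
        ring
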